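/- In the digraph constructed for path-graph leader selection, leader sets of size exactly k containing vertices ℓ_1 < ... < ℓ_k are in bijection with directed paths of exactly k+1 edges from s to t, namely s → ℓ_1 → ℓ_2 → ... → ℓ_k → t; moreover the weight of the path equals twice R({ℓ_1,...,ℓ_k}). -/

import Mathlib

/-- Weighted Laplacian of the path graph on `Fin n` where `w i` is the weight of
edge `(i, i+1)`. -/
def pathLaplacian (n : ℕ) (w : ℕ → ℝ) : Matrix (Fin n) (Fin n) ℝ :=
  Matrix.of fun i j =>
    if i = j then (if i.1 + 1 < n then w i.1 else 0) + (if i.1 = 0 then 0 else w (i.1 - 1))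
    else if j.1 = i.1 + 1 then -(w i.1)
    else if i.1 = j.1 + 1 then -(w j.1) else 0

/-- `trInv L P` is the trace of the inverse of the principal submatrix of `L` on
the index set `{v | P v}` (equal to `0` for an empty index set). -/
noncomputable def trInv {n : ℕ} (L : Matrix (Fin n) (Fin n) ℝ) (P : Fin n → Prop) : ℝ :=
  haveI : DecidablePred P := fun v => Classical.propDecidable _
  Matrix.trace
    ((L.submatrix (fun a : {v : Fin n // P v} => (a : Fin n))
        (fun a : {v : Fin n // P v} => (a : Fin n)))⁻¹)

/-- Edge relation of the auxiliary digraph: `inr false` is the source `s`,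
`inr true` is the target `t`, and `inl v` is vertex `v` of the path graph. -/
def auxEdge {n : ℕ} : (Fin n ⊕ Bool) → (Fin n ⊕ Bool) → Prop
  | Sum.inr false, Sum.inl _ => True
  | Sum.inl u, Sum.inl v => u < v
  | Sum.inl _, Sum.inr true => True
  | _, _ => False

/-- Edge weights of the auxiliary digraph built from the path Laplacian `L`. -/
noncomputable def auxWeight {n : ℕ} (L : Matrix (Fin n) (Fin n) ℝ) :
    (Fin n ⊕ Bool) → (Fin n ⊕ Bool) → ℝ
  | Sum.inr false, Sum.inl v => trInv L (fun x => x < v)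
  | Sum.inl u, Sum.inl v => trInv L (fun x => u < x ∧ x < v)
  | Sum.inl v, Sum.inr true => trInv L (fun x => v < x)
  | _, _ => 0

/-- The path `s → ℓ 0 → ℓ 1 → ⋯ → ℓ (k-1) → t` in the auxiliary digraph. -/
def leaderPath {n k : ℕ} (ℓ : Fin k → Fin n) : Fin (k + 2) → Fin n ⊕ Bool :=
  fun i =>
    if h0 : i.1 = 0 then Sum.inr false
    else if h : i.1 ≤ k then Sum.inl (ℓ ⟨i.1 - 1, by omega⟩)
    else Sum.inr true

lemma pathLaplacian_decomp {n : ℕ} (w : ℕ → ℝ) (i j : Fin n) :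
    pathLaplacian n w i j =
      (if j = i then (if i.1 + 1 < n then w i.1 else 0) + (if i.1 = 0 then 0 else w (i.1 - 1))
        else 0)
      + (if h : i.1 + 1 < n then (if j = ⟨i.1 + 1, h⟩ then -(w i.1) else 0) else 0)
      + (if h : 0 < i.1 then (if j = ⟨i.1 - 1, by omega⟩ then -(w (i.1 - 1)) else 0) else 0) := by
  simp only [pathLaplacian, Matrix.of_apply, Fin.ext_iff]
  split_ifs <;> try omega
  all_goals try ring
  all_goals rw [show (j:ℕ) = (i:ℕ) - 1 by omega]

lemma pathLaplacian_symm {n : ℕ} (w : ℕ → ℝ) (i j : Fin n) :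
    pathLaplacian n w i j = pathLaplacian n w j i := by
  rcases eq_or_ne i j with h | h
  · subst h; rfl
  · simp only [pathLaplacian, Matrix.of_apply, if_neg h, if_neg (Ne.symm h)]
    split_ifs <;> first | rfl | omega

lemma pathLaplacian_apply_far {n : ℕ} (w : ℕ → ℝ) {i j : Fin n}
    (h : i.1 + 1 < j.1 ∨ j.1 + 1 < i.1) : pathLaplacian n w i j = 0 := by
  have h1 : i ≠ j := by rw [Fin.ne_iff_vne]; omega
  simp only [pathLaplacian, Matrix.of_apply, if_neg h1]
  split_ifs <;> first | rfl | omega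

lemma pathLaplacian_mulVec {n : ℕ} (w : ℕ → ℝ) (x : Fin n → ℝ) (i : Fin n) :
    Matrix.mulVec (pathLaplacian n w) x i =
      ((if i.1 + 1 < n then w i.1 else 0) + (if i.1 = 0 then 0 else w (i.1 - 1))) * x i
      + (if h : i.1 + 1 < n then -(w i.1) * x ⟨i.1 + 1, h⟩ else 0)
      + (if h : 0 < i.1 then -(w (i.1 - 1)) * x ⟨i.1 - 1, by omega⟩ else 0) := by
  rw [Matrix.mulVec]
  simp only [dotProduct, pathLaplacian_decomp w i, add_mul, Finset.sum_add_distrib,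
    ite_mul, zero_mul, dite_mul, Finset.sum_ite_eq', Finset.mem_univ, if_true,
    Finset.sum_dite_irrel, Finset.sum_const_zero]

lemma natident (N : ℕ) (w : ℕ → ℝ) (z : ℕ → ℝ) :
    ∑ m ∈ Finset.range (N + 1),
      ((if m + 1 < N + 1 then w m * (z m * (z m - z (m + 1))) else 0)
        + (if 0 < m then w (m - 1) * (z m * (z m - z (m - 1))) else 0))
    = ∑ m ∈ Finset.range (N + 1), (if m + 1 < N + 1 then w m * (z m - z (m + 1)) ^ 2 else 0) := by
  rw [Finset.sum_add_distrib]
  have e1 : ∑ m ∈ Finset.range (N + 1),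
      (if m + 1 < N + 1 then w m * (z m * (z m - z (m + 1))) else 0)
      = ∑ m ∈ Finset.range N, w m * (z m * (z m - z (m + 1))) := by
    rw [Finset.sum_range_succ, if_neg (by omega)]
    rw [add_zero]
    exact Finset.sum_congr rfl fun m hm => by
      rw [if_pos (by simpa using Finset.mem_range.mp hm)]
  have e2 : ∑ m ∈ Finset.range (N + 1),
      (if 0 < m then w (m - 1) * (z m * (z m - z (m - 1))) else 0)
      = ∑ m ∈ Finset.range N, w m * (z (m + 1) * (z (m + 1) - z m)) := by
    rw [Finset.sum_range_succ', if_neg (lt_irrefl 0), add_zero]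
    exact Finset.sum_congr rfl fun m hm => by
      rw [if_pos (Nat.succ_pos m)]; simp only [Nat.add_sub_cancel]
  have e3 : ∑ m ∈ Finset.range (N + 1), (if m + 1 < N + 1 then w m * (z m - z (m + 1)) ^ 2 else 0)
      = ∑ m ∈ Finset.range N, w m * (z m - z (m + 1)) ^ 2 := by
    rw [Finset.sum_range_succ, if_neg (by omega), add_zero]
    exact Finset.sum_congr rfl fun m hm => by
      rw [if_pos (by simpa using Finset.mem_range.mp hm)]
  rw [e1, e2, e3, ← Finset.sum_add_distrib]
  exact Finset.sum_congr rfl fun m _ => by ring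

lemma pathLaplacian_quadform {n : ℕ} (w : ℕ → ℝ) (x : Fin n → ℝ) :
    dotProduct x (Matrix.mulVec (pathLaplacian n w) x)
      = ∑ m ∈ Finset.range n,
          (if h : m + 1 < n then w m * (x ⟨m, by omega⟩ - x ⟨m + 1, h⟩) ^ 2 else 0) := by
  classical
  set z : ℕ → ℝ := fun m => if h : m < n then x ⟨m, h⟩ else 0 with hz
  have key : ∀ i : Fin n, x i * Matrix.mulVec (pathLaplacian n w) x i
      = (if i.1 + 1 < n then w i.1 * (z i.1 * (z i.1 - z (i.1 + 1))) else 0)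
        + (if 0 < i.1 then w (i.1 - 1) * (z i.1 * (z i.1 - z (i.1 - 1))) else 0) := by
    intro i
    have hin : i.1 < n := i.isLt
    rw [pathLaplacian_mulVec]
    by_cases h1 : i.1 + 1 < n <;> by_cases h2 : 0 < i.1
    · simp only [hz, if_pos h1, if_neg (show ¬ i.1 = 0 by omega), dif_pos h1, dif_pos h2,
        if_pos h2, dif_pos hin, dif_pos (show i.1 - 1 < n by omega), Fin.eta]
      ring
    · simp only [hz, if_pos h1, if_pos (show i.1 = 0 by omega), dif_pos h1, dif_neg h2,
        if_neg h2, dif_pos hin, Fin.eta]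
      ring
    · simp only [hz, if_neg h1, if_neg (show ¬ i.1 = 0 by omega), dif_neg h1, dif_pos h2,
        if_pos h2, dif_pos hin, dif_pos (show i.1 - 1 < n by omega), Fin.eta]
      ring
    · simp only [hz, if_neg h1, if_pos (show i.1 = 0 by omega), dif_neg h1, dif_neg h2,
        if_neg h2, dif_pos hin, Fin.eta]
      ring
  rw [dotProduct]
  rw [Finset.sum_congr rfl fun i _ => key i]
  have hzx : ∀ (m : ℕ) (h : m + 1 < n), z m = x ⟨m, by omega⟩ ∧ z (m + 1) = x ⟨m + 1, h⟩ := by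
    intro m h
    constructor <;> simp [hz, h, Nat.lt_of_succ_lt h]
  rcases n with _ | N
  · simp
  · rw [show ∑ i : Fin (N+1), ((if i.1 + 1 < N+1 then w i.1 * (z i.1 * (z i.1 - z (i.1 + 1))) else 0)
        + (if 0 < i.1 then w (i.1 - 1) * (z i.1 * (z i.1 - z (i.1 - 1))) else 0))
        = ∑ m ∈ Finset.range (N+1), ((if m + 1 < N+1 then w m * (z m * (z m - z (m + 1))) else 0)
        + (if 0 < m then w (m - 1) * (z m * (z m - z (m - 1))) else 0))
        from Fin.sum_univ_eq_sum_range (fun m =>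
          (if m + 1 < N+1 then w m * (z m * (z m - z (m + 1))) else 0)
          + (if 0 < m then w (m - 1) * (z m * (z m - z (m - 1))) else 0)) (N+1)]
    rw [natident]
    exact Finset.sum_congr rfl fun m hm => by
      by_cases h : m + 1 < N + 1
      · rw [if_pos h, dif_pos h, (hzx m h).1, (hzx m h).2]
      · rw [if_neg h, dif_neg h]

lemma pathLaplacian_quadform_nonneg {n : ℕ} (w : ℕ → ℝ) (hw : ∀ i, i + 1 < n → 0 < w i)
    (y : Fin n → ℝ) : 0 ≤ dotProduct y (Matrix.mulVec (pathLaplacian n w) y) := by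
  rw [pathLaplacian_quadform]
  refine Finset.sum_nonneg fun m _ => ?_
  by_cases h : m + 1 < n
  · rw [dif_pos h]
    exact mul_nonneg (hw m h).le (sq_nonneg _)
  · rw [dif_neg h]

lemma pathLaplacian_quadform_eq_zero {n : ℕ} (w : ℕ → ℝ) (hw : ∀ i, i + 1 < n → 0 < w i)
    (y : Fin n → ℝ) (hy : dotProduct y (Matrix.mulVec (pathLaplacian n w) y) = 0)
    (v0 : Fin n) (hv0 : y v0 = 0) : y = 0 := by
  rw [pathLaplacian_quadform] at hy
  have hterm : ∀ m ∈ Finset.range n,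
      (if h : m + 1 < n then w m * (y ⟨m, by omega⟩ - y ⟨m + 1, h⟩) ^ 2 else 0) = 0 := by
    rw [← Finset.sum_eq_zero_iff_of_nonneg]
    · exact hy
    · intro m _
      by_cases h : m + 1 < n
      · rw [dif_pos h]; exact mul_nonneg (hw m h).le (sq_nonneg _)
      · rw [dif_neg h]
  have hstep : ∀ (m : ℕ) (h : m + 1 < n), y ⟨m, by omega⟩ = y ⟨m + 1, h⟩ := by
    intro m h
    have := hterm m (Finset.mem_range.mpr (by omega))
    rw [dif_pos h] at this
    have h2 : (y ⟨m, by omega⟩ - y ⟨m + 1, h⟩) ^ 2 = 0 := by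
      rcases mul_eq_zero.mp this with h3 | h3
      · exact absurd h3 (hw m h).ne'
      · exact h3
    have := (pow_eq_zero_iff two_ne_zero).mp h2
    linarith [sub_eq_zero.mp this]
  have n0 : 0 < n := v0.pos
  have hconst : ∀ (m : ℕ) (h : m < n), y ⟨m, h⟩ = y ⟨0, n0⟩ := by
    intro m
    induction m with
    | zero => intro h; rfl
    | succ p ih =>
      intro h
      rw [← hstep p h, ih (by omega)]
  funext v
  have h1 : y v = y ⟨0, n0⟩ := by
    have := hconst v.1 v.isLt
    simpa [Fin.eta] using this
  have h2 : y v0 = y ⟨0, n0⟩ := by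
    have := hconst v0.1 v0.isLt
    simpa [Fin.eta] using this
  rw [Pi.zero_apply, h1, ← h2, hv0]

lemma pathLaplacian_submatrix_posDef {n : ℕ} (w : ℕ → ℝ) (hw : ∀ i, i + 1 < n → 0 < w i)
    (P : Fin n → Prop) [DecidablePred P] (v0 : Fin n) (hv0 : ¬ P v0) :
    (((pathLaplacian n w).submatrix (fun a : {v : Fin n // P v} => (a : Fin n))
        (fun a : {v : Fin n // P v} => (a : Fin n)))).PosDef := by
  rw [Matrix.posDef_iff_dotProduct_mulVec]
  constructor
  · ext a b
    simp only [Matrix.conjTranspose_apply, Matrix.submatrix_apply, star_trivial]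
    exact pathLaplacian_symm w b.1 a.1
  · intro x hx
    set y : Fin n → ℝ := fun v => if h : P v then x ⟨v, h⟩ else 0 with hy
    have hsub : ∀ (f : Fin n → ℝ), (∑ u : Fin n, f u * y u) = ∑ a : {v : Fin n // P v}, f a * x a := by
      intro f
      calc ∑ u : Fin n, f u * y u
          = ∑ u ∈ Finset.univ.filter P, f u * y u := by
            rw [Finset.sum_filter]
            refine Finset.sum_congr rfl fun u _ => ?_
            by_cases h : P u
            · rw [if_pos h]
            · simp [hy, h]
        _ = ∑ a : {v : Fin n // P v}, f a.1 * y a.1 :=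
            Finset.sum_subtype _ (fun v => by simp) _
        _ = ∑ a : {v : Fin n // P v}, f a.1 * x a :=
            Finset.sum_congr rfl fun a _ => by simp [hy, a.2]
    have key : dotProduct (star x)
        ((((pathLaplacian n w).submatrix (fun a : {v : Fin n // P v} => (a : Fin n))
        (fun a : {v : Fin n // P v} => (a : Fin n)))).mulVec x)
        = dotProduct y (Matrix.mulVec (pathLaplacian n w) y) := by
      rw [dotProduct, dotProduct]
      have inner : ∀ v : Fin n, (Matrix.mulVec (pathLaplacian n w) y) v
          = ∑ a : {v : Fin n // P v}, pathLaplacian n w v a * x a := by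
        intro v
        rw [Matrix.mulVec, dotProduct]
        exact hsub (fun u => pathLaplacian n w v u)
      calc ∑ a : {v : Fin n // P v}, star x a *
            (((pathLaplacian n w).submatrix _ _).mulVec x) a
          = ∑ a : {v : Fin n // P v}, (Matrix.mulVec (pathLaplacian n w) y) a.1 * x a := by
            refine Finset.sum_congr rfl fun a _ => ?_
            rw [inner, Matrix.mulVec, dotProduct, star_trivial, mul_comm]
            rfl
        _ = ∑ v : Fin n, (Matrix.mulVec (pathLaplacian n w) y) v * y v := (hsub _).symm
        _ = ∑ v : Fin n, y v * (Matrix.mulVec (pathLaplacian n w) y) v := by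
            exact Finset.sum_congr rfl fun v _ => mul_comm _ _
    rw [key]
    rcases lt_or_eq_of_le (pathLaplacian_quadform_nonneg w hw y) with h | h
    · exact h
    · exfalso
      have hzero : y = 0 := pathLaplacian_quadform_eq_zero w hw y h.symm v0 (by simp [hy, hv0])
      apply hx
      funext a
      have : y a.1 = 0 := by rw [hzero]; rfl
      simpa [hy, a.2] using this

lemma trInv_congr {n : ℕ} (L : Matrix (Fin n) (Fin n) ℝ) {P Q : Fin n → Prop}
    (h : ∀ v, P v ↔ Q v) : trInv L P = trInv L Q := by
  have : P = Q := funext fun v => propext (h v)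
  subst this; rfl

lemma trInv_eq {n : ℕ} (L : Matrix (Fin n) (Fin n) ℝ) (P : Fin n → Prop) [DecidablePred P] :
    trInv L P = Matrix.trace
      ((L.submatrix (fun a : {v : Fin n // P v} => (a : Fin n))
        (fun a : {v : Fin n // P v} => (a : Fin n)))⁻¹) := by
  unfold trInv
  congr!

lemma trace_fromBlocks {m p : Type*} [Fintype m] [Fintype p]
    (A : Matrix m m ℝ) (B : Matrix m p ℝ) (C : Matrix p m ℝ) (D : Matrix p p ℝ) :
    (Matrix.fromBlocks A B C D).trace = A.trace + D.trace := by
  simp [Matrix.trace, Fintype.sum_sum_type, Matrix.diag]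

lemma trInv_union {n : ℕ} (M : Matrix (Fin n) (Fin n) ℝ) (P Q : Fin n → Prop)
    [DecidablePred P] [DecidablePred Q]
    (hdisj : ∀ v, P v → Q v → False)
    (hPQ : ∀ u v : Fin n, P u → Q v → M u v = 0)
    (hQP : ∀ u v : Fin n, Q u → P v → M u v = 0)
    (hP : IsUnit (M.submatrix (fun a : {v : Fin n // P v} => (a : Fin n))
        (fun a : {v : Fin n // P v} => (a : Fin n))).det)
    (hQ : IsUnit (M.submatrix (fun a : {v : Fin n // Q v} => (a : Fin n))
        (fun a : {v : Fin n // Q v} => (a : Fin n))).det) :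
    trInv M (fun v => P v ∨ Q v) = trInv M P + trInv M Q := by
  classical
  rw [trInv_eq M (fun v => P v ∨ Q v), trInv_eq M P, trInv_eq M Q]
  set A := M.submatrix (fun a : {v : Fin n // P v} => (a : Fin n))
      (fun a : {v : Fin n // P v} => (a : Fin n)) with hA
  set D := M.submatrix (fun a : {v : Fin n // Q v} => (a : Fin n))
      (fun a : {v : Fin n // Q v} => (a : Fin n)) with hD
  set U := M.submatrix (fun a : {v : Fin n // P v ∨ Q v} => (a : Fin n))
      (fun a : {v : Fin n // P v ∨ Q v} => (a : Fin n)) with hU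
  let e : {v : Fin n // P v} ⊕ {v : Fin n // Q v} ≃ {v : Fin n // P v ∨ Q v} :=
    { toFun := Sum.elim (fun a => ⟨a.1, Or.inl a.2⟩) (fun a => ⟨a.1, Or.inr a.2⟩)
      invFun := fun a => if h : P a.1 then Sum.inl ⟨a.1, h⟩
        else Sum.inr ⟨a.1, a.2.resolve_left h⟩
      left_inv := by
        rintro (a | a)
        · simp [a.2]
        · have hnp : ¬ P a.1 := fun h => hdisj a.1 h a.2
          simp [hnp]
      right_inv := by
        intro a
        by_cases h : P a.1
        · simp [h]
        · simp [h] }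
  have hblock : U.submatrix e e = Matrix.fromBlocks A 0 0 D := by
    ext i j
    rcases i with a | a <;> rcases j with b | b <;>
      simp only [Matrix.submatrix_apply, Matrix.fromBlocks_apply₁₁, Matrix.fromBlocks_apply₁₂,
        Matrix.fromBlocks_apply₂₁, Matrix.fromBlocks_apply₂₂, Matrix.zero_apply, hA, hD, hU,
        Sum.elim_inl, Sum.elim_inr, e, Equiv.coe_fn_mk]
    · exact hPQ a.1 b.1 a.2 b.2
    · exact hQP a.1 b.1 a.2 b.2
  have hinv : (Matrix.fromBlocks A 0 0 D)⁻¹ = Matrix.fromBlocks A⁻¹ 0 0 D⁻¹ := by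
    apply Matrix.inv_eq_right_inv
    rw [Matrix.fromBlocks_multiply]
    simp only [Matrix.mul_nonsing_inv _ hP, Matrix.mul_nonsing_inv _ hQ, Matrix.mul_zero,
      Matrix.zero_mul, add_zero, zero_add]
    exact Matrix.fromBlocks_one
  have htr : U⁻¹.trace = (U.submatrix e e)⁻¹.trace := by
    rw [Matrix.inv_submatrix_equiv]
    rw [Matrix.trace, Matrix.trace]
    exact (Equiv.sum_comp e (fun a => U⁻¹ a a)).symm
  rw [htr, hblock, hinv, trace_fromBlocks]

lemma leaderPath_zero {n k : ℕ} (ℓ : Fin k → Fin n) (i : Fin (k+2)) (h : i.1 = 0) :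
    leaderPath ℓ i = Sum.inr false := by simp [leaderPath, h]

lemma leaderPath_mid {n k : ℕ} (ℓ : Fin k → Fin n) (i : Fin (k+2)) (h0 : 0 < i.1)
    (h : i.1 ≤ k) : leaderPath ℓ i = Sum.inl (ℓ ⟨i.1 - 1, by omega⟩) := by
  simp only [leaderPath, dif_neg (by omega : ¬ i.1 = 0), dif_pos h]

lemma leaderPath_last {n k : ℕ} (ℓ : Fin k → Fin n) (i : Fin (k+2)) (h : i.1 = k + 1) :
    leaderPath ℓ i = Sum.inr true := by
  simp only [leaderPath, dif_neg (by omega : ¬ i.1 = 0), dif_neg (by omega : ¬ i.1 ≤ k)]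

lemma weight_sum {n k : ℕ} (w : ℕ → ℝ) (hw : ∀ i, i + 1 < n → 0 < w i) (hk : 0 < k)
    (ℓ : Fin k → Fin n) (hℓ : StrictMono ℓ) :
    (∑ i : Fin (k + 1),
        auxWeight (pathLaplacian n w) (leaderPath ℓ i.castSucc) (leaderPath ℓ i.succ))
      = trInv (pathLaplacian n w) (fun v => ∀ i, ℓ i ≠ v) := by
  classical
  set L := pathLaplacian n w with hL
  set W : ℕ → ℝ := fun i => if h : i < k + 1 then
      auxWeight L (leaderPath ℓ (Fin.castSucc ⟨i, h⟩)) (leaderPath ℓ (Fin.succ ⟨i, h⟩))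
    else 0 with hWdef
  have hW0 : W 0 = trInv L (fun x => x < ℓ ⟨0, hk⟩) := by
    rw [hWdef]
    simp only [dif_pos (Nat.succ_pos k)]
    rw [leaderPath_zero ℓ _ rfl, leaderPath_mid ℓ _ (by simp) (by simpa using Nat.succ_le_of_lt hk)]
    rfl
  have hWmid : ∀ (i : ℕ) (h0 : 0 < i) (h : i < k),
      W i = trInv L (fun x => ℓ ⟨i - 1, by omega⟩ < x ∧ x < ℓ ⟨i, h⟩) := by
    intro i h0 h
    rw [hWdef]
    simp only [dif_pos (by omega : i < k + 1)]
    rw [leaderPath_mid ℓ _ (by simpa using h0) (by simpa using h.le),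
      leaderPath_mid ℓ _ (by simp) (by simpa using h)]
    simp only [Fin.val_succ, Nat.add_sub_cancel, Fin.coe_castSucc]
    rfl
  have hWlast : W k = trInv L (fun x => ℓ ⟨k - 1, by omega⟩ < x) := by
    rw [hWdef]
    simp only [dif_pos (Nat.lt_succ_self k)]
    rw [leaderPath_mid ℓ _ (by simpa using hk) (by simp),
      leaderPath_last ℓ _ (by simp)]
    rfl
  have himg : ∀ (j : ℕ) (hj : j < k), ¬ (fun x => x < ℓ ⟨j, hj⟩ ∧ ∀ i, ℓ i ≠ x) (ℓ ⟨j, hj⟩) :=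
    fun j hj h => h.2 ⟨j, hj⟩ rfl
  have main : ∀ (j : ℕ) (hj : j < k),
      ∑ i ∈ Finset.range (j + 1), W i
        = trInv L (fun x => x < ℓ ⟨j, hj⟩ ∧ ∀ i, ℓ i ≠ x) := by
    intro j
    induction j with
    | zero =>
      intro hj
      rw [Finset.sum_range_one, hW0]
      refine trInv_congr L fun v => ⟨fun h => ⟨h, fun i hi => ?_⟩, fun h => h.1⟩
      have : ℓ ⟨0, hk⟩ ≤ ℓ i := hℓ.monotone (by exact Fin.mk_le_mk.mpr (Nat.zero_le _))
      rw [hi] at this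
      exact absurd h (not_lt.mpr this)
    | succ j ih =>
      intro hj
      have hjk : j < k := by omega
      rw [Finset.sum_range_succ, ih hjk, hWmid (j + 1) (Nat.succ_pos j) hj]
      simp only [Nat.add_sub_cancel]
      rw [← trInv_union L _ _
        (fun v hP hQ => absurd hP.1 (not_lt.mpr hQ.1.le))
        (fun u v hP hQ => pathLaplacian_apply_far w (Or.inl (by
          have h1 : u.1 < (ℓ ⟨j, hjk⟩).1 := hP.1
          have h2 : (ℓ ⟨j, hjk⟩).1 < v.1 := hQ.1
          omega)))
        (fun u v hP hQ => pathLaplacian_apply_far w (Or.inr (by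
          have h1 : v.1 < (ℓ ⟨j, hjk⟩).1 := hQ.1
          have h2 : (ℓ ⟨j, hjk⟩).1 < u.1 := hP.1
          omega)))
        ((pathLaplacian_submatrix_posDef w hw _ (ℓ ⟨j, hjk⟩) (himg j hjk)).det_pos.ne'.isUnit)
        ((pathLaplacian_submatrix_posDef w hw _ (ℓ ⟨j, hjk⟩)
          (fun h => absurd h.1 (lt_irrefl _))).det_pos.ne'.isUnit)]
      refine trInv_congr L fun v => ?_
      constructor
      · rintro (⟨h1, h2⟩ | ⟨h1, h2⟩)
        · exact ⟨h1.trans (hℓ (by exact Fin.mk_lt_mk.mpr (Nat.lt_succ_self j))), h2⟩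
        · refine ⟨h2, fun i hi => ?_⟩
          rcases le_or_gt i.1 j with hij | hij
          · have : ℓ i ≤ ℓ ⟨j, hjk⟩ := hℓ.monotone (by exact Fin.mk_le_mk.mpr hij |>.trans_eq' rfl)
            rw [hi] at this
            exact absurd h1 (not_lt.mpr this)
          · have : ℓ ⟨j + 1, hj⟩ ≤ ℓ i := hℓ.monotone (by exact Fin.mk_le_mk.mpr hij)
            rw [hi] at this
            exact absurd h2 (not_lt.mpr this)
      · rintro ⟨h1, h2⟩
        rcases lt_trichotomy v (ℓ ⟨j, hjk⟩) with h | h | h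
        · exact Or.inl ⟨h, h2⟩
        · exact absurd h.symm (h2 ⟨j, hjk⟩)
        · exact Or.inr ⟨h, h1⟩
  have hk1 : k - 1 < k := by omega
  have hfin : trInv L (fun v => ∀ i, ℓ i ≠ v) = ∑ i ∈ Finset.range (k + 1), W i := by
    rw [Finset.sum_range_succ, hWlast]
    have hk2 : k - 1 + 1 = k := by omega
    have hmain := main (k - 1) hk1
    rw [hk2] at hmain
    rw [hmain]
    rw [← trInv_union L _ _
      (fun v hP hQ => absurd hP.1 (not_lt.mpr hQ.le))
      (fun u v hP hQ => pathLaplacian_apply_far w (Or.inl (by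
        have h1 : u.1 < (ℓ ⟨k - 1, hk1⟩).1 := hP.1
        have h2 : (ℓ ⟨k - 1, hk1⟩).1 < v.1 := hQ
        omega)))
      (fun u v hP hQ => pathLaplacian_apply_far w (Or.inr (by
        have h1 : v.1 < (ℓ ⟨k - 1, hk1⟩).1 := hQ.1
        have h2 : (ℓ ⟨k - 1, hk1⟩).1 < u.1 := hP
        omega)))
      ((pathLaplacian_submatrix_posDef w hw _ (ℓ ⟨k - 1, hk1⟩) (himg _ hk1)).det_pos.ne'.isUnit)
      ((pathLaplacian_submatrix_posDef w hw _ (ℓ ⟨k - 1, hk1⟩)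
        (fun h => absurd h (lt_irrefl _))).det_pos.ne'.isUnit)]
    refine trInv_congr L fun v => ?_
    constructor
    · intro h2
      rcases lt_trichotomy v (ℓ ⟨k - 1, hk1⟩) with h | h | h
      · exact Or.inl ⟨h, h2⟩
      · exact absurd h.symm (h2 ⟨k - 1, hk1⟩)
      · exact Or.inr h
    · rintro (⟨h1, h2⟩ | h1)
      · exact h2
      · intro i hi
        have : ℓ i ≤ ℓ ⟨k - 1, hk1⟩ := hℓ.monotone (by exact Fin.mk_le_mk.mpr (by omega))
        rw [hi] at this
        exact absurd h1 (not_lt.mpr this)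
  rw [hfin, ← Fin.sum_univ_eq_sum_range W (k + 1)]
  refine Finset.sum_congr rfl fun i _ => ?_
  rw [hWdef]
  simp only [dif_pos i.isLt]

/-- Leader sets of size exactly `k` (given by `ℓ 0 < ⋯ < ℓ (k-1)`) are in
bijection with directed `s`–`t` paths of exactly `k+1` edges in the auxiliary
digraph, via `ℓ ↦ (s, ℓ 0, …, ℓ (k-1), t)`, and the weight of the path equals
twice the total steady-state variance `R({ℓ 0, …, ℓ (k-1)})`. -/
theorem path_leaderSets_biject_paths {n k : ℕ} (w : ℕ → ℝ)
    (hw : ∀ i, i + 1 < n → 0 < w i) (hk : 0 < k) :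
    (∀ ℓ : Fin k → Fin n, StrictMono ℓ →
      (∀ i : Fin (k + 1),
          auxEdge (leaderPath ℓ i.castSucc) (leaderPath ℓ i.succ)) ∧
      (∑ i : Fin (k + 1),
          auxWeight (pathLaplacian n w) (leaderPath ℓ i.castSucc) (leaderPath ℓ i.succ))
        = 2 * ((1 / 2 : ℝ) *
            trInv (pathLaplacian n w) (fun v => v ∉ Finset.image ℓ Finset.univ))) ∧
    (∀ p : Fin (k + 2) → Fin n ⊕ Bool,
      p 0 = Sum.inr false → p (Fin.last (k + 1)) = Sum.inr true →
      (∀ i : Fin (k + 1), auxEdge (p i.castSucc) (p i.succ)) →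
      ∃! ℓ : Fin k → Fin n, StrictMono ℓ ∧ p = leaderPath ℓ) := by
  constructor
  · intro ℓ hℓ
    constructor
    · intro i
      by_cases h0 : i.1 = 0
      · rw [leaderPath_zero ℓ _ (by simpa using h0),
          leaderPath_mid ℓ _ (by simp [h0]) (by simp [h0]; omega)]
        trivial
      · by_cases hl : i.1 = k
        · rw [leaderPath_mid ℓ _ (by show 0 < i.1; omega) (by simp; omega),
            leaderPath_last ℓ _ (by simp [hl])]
          trivial
        · have hik : i.1 < k := by omega
          rw [leaderPath_mid ℓ _ (by show 0 < i.1; omega) (by simp; omega),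
            leaderPath_mid ℓ _ (by simp) (by simp; omega)]
          show ℓ _ < ℓ _
          apply hℓ
          rw [Fin.mk_lt_mk]
          simp only [Fin.coe_castSucc, Fin.val_succ]
          omega
    · rw [weight_sum w hw hk ℓ hℓ,
        trInv_congr (pathLaplacian n w)
          (show ∀ v, (∀ i, ℓ i ≠ v) ↔ v ∉ Finset.image ℓ Finset.univ from
            fun v => by simp [eq_comm])]
      ring
  · obtain ⟨K, rfl⟩ : ∃ K, k = K + 1 := ⟨k - 1, by omega⟩
    intro p h0 hlast hedge
    have hnotfalse : ∀ i : Fin (K + 3), 0 < i.1 → p i ≠ Sum.inr false := by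
      intro i hi hcontra
      have hi3 : i.1 < K + 3 := i.isLt
      have hed := hedge ⟨i.1 - 1, by omega⟩
      rw [show (⟨i.1 - 1, by omega⟩ : Fin (K + 2)).succ = i from Fin.ext (by
        simp only [Fin.val_succ]; omega)] at hed
      rw [hcontra] at hed
      rcases hq : p (Fin.castSucc ⟨i.1 - 1, by omega⟩) with v | b
      · rw [hq] at hed; exact hed
      · rw [hq] at hed; cases b <;> exact hed
    have hstep : ∀ i : Fin (K + 3), 0 < i.1 → i.1 ≤ K + 1 → ∃ v, p i = Sum.inl v := by
      intro i h1 h2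
      rcases hp : p i with v | b
      · exact ⟨v, rfl⟩
      · cases b
        · exact absurd hp (hnotfalse i h1)
        · exfalso
          have hed := hedge ⟨i.1, by omega⟩
          rw [show Fin.castSucc (⟨i.1, by omega⟩ : Fin (K + 2)) = i from Fin.ext rfl,
            hp] at hed
          rcases hq : p (Fin.succ ⟨i.1, by omega⟩) with v' | b'
          · rw [hq] at hed; exact hed
          · rw [hq] at hed; cases b' <;> exact hed
    have hn : 0 < n := by
      obtain ⟨v, -⟩ := hstep ⟨1, by omega⟩ (by simp) (by simp)
      exact v.pos
    set ℓ0 : Fin (K + 1) → Fin n :=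
      fun j => Sum.elim id (fun _ => ⟨0, hn⟩) (p ⟨j.1 + 1, by omega⟩) with hℓ0
    have hpℓ : ∀ j : Fin (K + 1), p ⟨j.1 + 1, by omega⟩ = Sum.inl (ℓ0 j) := by
      intro j
      obtain ⟨v, hv⟩ := hstep ⟨j.1 + 1, by omega⟩ (by simp) (by simp; omega)
      rw [hℓ0]
      simp only []
      rw [hv]
      rfl
    have hmono : StrictMono ℓ0 := by
      rw [Fin.strictMono_iff_lt_succ]
      intro a
      have hed := hedge ⟨a.1 + 1, by omega⟩
      rw [show Fin.castSucc (⟨a.1 + 1, by omega⟩ : Fin (K + 2))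
          = ⟨a.1 + 1, by omega⟩ from Fin.ext rfl,
        show Fin.succ (⟨a.1 + 1, by omega⟩ : Fin (K + 2))
          = ⟨a.1 + 2, by omega⟩ from Fin.ext rfl] at hed
      have e1 : p ⟨a.1 + 1, by omega⟩ = Sum.inl (ℓ0 a.castSucc) := by
        have := hpℓ a.castSucc
        simpa using this
      have e2 : p ⟨a.1 + 2, by omega⟩ = Sum.inl (ℓ0 a.succ) := by
        have := hpℓ a.succ
        simpa using this
      rw [e1, e2] at hed
      exact hed
    have hpeq : p = leaderPath ℓ0 := by
      funext i
      by_cases hi0 : i.1 = 0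
      · rw [leaderPath_zero ℓ0 _ hi0, show i = 0 from Fin.ext (by simpa using hi0), h0]
      · by_cases hik : i.1 ≤ K + 1
        · rw [leaderPath_mid ℓ0 _ (by omega) hik]
          have := hpℓ ⟨i.1 - 1, by omega⟩
          rw [show (⟨(⟨i.1 - 1, by omega⟩ : Fin (K+1)).1 + 1, by omega⟩ : Fin (K + 3)) = i
            from Fin.ext (by simp; omega)] at this
          exact this
        · rw [leaderPath_last ℓ0 _ (by omega),
            show i = Fin.last (K + 2) from Fin.ext (by simp; omega)]
          exact hlast
    refine ⟨ℓ0, ⟨hmono, hpeq⟩, ?_⟩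
    rintro ℓ' ⟨-, hp'⟩
    funext j
    have h1 := hpℓ j
    have h2 : p ⟨j.1 + 1, by omega⟩ = Sum.inl (ℓ' j) := by
      rw [hp', leaderPath_mid ℓ' _ (by simp) (by simp; omega)]
      congr 1
    rw [h1] at h2
    exact (Sum.inl.injEq _ _ ▸ h2).symm
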